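/- (Main theorem, K ≥ 3 case) Let m(y) = ∫ φ(y−μ) dF(μ) be the marginal of a N(μ,1) model under an arbitrary Borel probability prior F on ℝ. There is no prior F and no polynomial P of degree K ≥ 3 such that log m(y) = P(y) for all real y. Equivalently, for all priors F and all β₀,…,β_K with β_K ≠ 0 and K ≥ 3, ∫ φ(y−μ) dF(μ) ≠ exp(β₀ + Σ_{k=1}^K β_k y^k) for some y. -/

import Mathlib

open MeasureTheory Real Finset

/-- Standard normal density. -/
noncomputable def stdNormalPDF (x : ℝ) : ℝ := (Real.sqrt (2 * π))⁻¹ * Real.exp (-x ^ 2 / 2)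

open Filter Polynomial in
lemma aux_mkPoly (K : ℕ) (γ : ℕ → ℝ) :
    ∃ p : Polynomial ℝ, (∀ y : ℝ, p.eval y = ∑ k ∈ Finset.range (K + 1), γ k * y ^ k) ∧
      p.natDegree ≤ K ∧ p.coeff K = γ K := by
  refine ⟨∑ k ∈ Finset.range (K + 1), Polynomial.C (γ k) * Polynomial.X ^ k, ?_, ?_, ?_⟩
  · intro y
    simp [Polynomial.eval_finset_sum]
  · refine Polynomial.natDegree_sum_le_of_forall_le _ _ fun k hk => ?_
    exact le_trans (Polynomial.natDegree_C_mul_X_pow_le _ _) (by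
      simpa using Nat.lt_succ_iff.mp (Finset.mem_range.mp hk))
  · rw [Polynomial.finset_sum_coeff]
    simp only [Polynomial.coeff_C_mul, Polynomial.coeff_X_pow]
    rw [Finset.sum_eq_single K]
    · simp
    · intro b _ hb; simp [Ne.symm hb]
    · intro h; exact absurd (Finset.self_mem_range_succ K) h

lemma stdNormalPDF_nonneg (x : ℝ) : 0 ≤ stdNormalPDF x := by
  unfold stdNormalPDF
  positivity

lemma stdNormalPDF_le (x : ℝ) : stdNormalPDF x ≤ (Real.sqrt (2 * π))⁻¹ := by
  unfold stdNormalPDF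
  have h1 : Real.exp (-x ^ 2 / 2) ≤ 1 := by
    rw [show (1:ℝ) = Real.exp 0 by simp]
    exact Real.exp_le_exp.mpr (by nlinarith [sq_nonneg x])
  have h2 : (0:ℝ) < (Real.sqrt (2 * π))⁻¹ := by positivity
  nlinarith

open Filter Polynomial in
/-- (Main theorem, `K ≥ 3` case) No Borel probability prior `F` on `ℝ` can produce a
`N(μ,1)`-mixture marginal whose logarithm is a polynomial of degree `K ≥ 3`: for every
prior and every polynomial with `β_K ≠ 0`, `K ≥ 3`, the marginal differs from
`exp(β₀ + Σ_{k=1}^K β_k y^k)` at some `y`. -/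
theorem no_prior_for_cubic_log_marginal
    (F : Measure ℝ) [IsProbabilityMeasure F]
    (K : ℕ) (hK : 3 ≤ K) (β : ℕ → ℝ) (hβK : β K ≠ 0) :
    ∃ y : ℝ, (∫ μ, stdNormalPDF (y - μ) ∂F)
      ≠ Real.exp (∑ k ∈ Finset.range (K + 1), β k * y ^ k) := by
  by_contra h
  push_neg at h
  set c : ℝ := (Real.sqrt (2 * π))⁻¹ with hc_def
  have hc : (0:ℝ) < c := by positivity
  set S : ℝ → ℝ := fun y => ∑ k ∈ Finset.range (K + 1), β k * y ^ k with hS_def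
  -- integrability
  have hint : ∀ y : ℝ, Integrable (fun μ => stdNormalPDF (y - μ)) F := by
    intro y
    have hcont : Continuous fun μ : ℝ => stdNormalPDF (y - μ) := by
      unfold stdNormalPDF; fun_prop
    refine (integrable_const c).mono' hcont.aestronglyMeasurable ?_
    filter_upwards with μ
    rw [Real.norm_eq_abs, abs_of_nonneg (stdNormalPDF_nonneg _)]
    exact stdNormalPDF_le _
  -- upper bound
  have hup : ∀ y : ℝ, S y ≤ Real.log c := by
    intro y
    have h1 : (∫ μ, stdNormalPDF (y - μ) ∂F) ≤ ∫ _ : ℝ, c ∂F :=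
      integral_mono (hint y) (integrable_const c) fun μ => stdNormalPDF_le _
    rw [integral_const, measureReal_def, measure_univ] at h1
    simp only [ENNReal.toReal_one, smul_eq_mul, one_mul] at h1
    rw [h y] at h1
    rw [← Real.exp_log hc] at h1
    exact Real.exp_le_exp.mp h1
  -- mass on a compact interval
  have hM : ∃ n : ℕ, F (Set.Icc (-(n:ℝ)) n) ≠ 0 := by
    by_contra hall
    push_neg at hall
    have h0 : F (⋃ n : ℕ, Set.Icc (-(n:ℝ)) n) = 0 := measure_iUnion_null hall
    have huniv : (⋃ n : ℕ, Set.Icc (-(n:ℝ)) n) = Set.univ := by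
      ext x
      simp only [Set.mem_iUnion, Set.mem_Icc, Set.mem_univ, iff_true]
      obtain ⟨n, hn⟩ := exists_nat_ge |x|
      exact ⟨n, by constructor <;> [linarith [neg_abs_le x]; linarith [le_abs_self x]]⟩
    rw [huniv, measure_univ] at h0
    simp at h0
  obtain ⟨M, hM⟩ := hM
  set ε : ℝ := (F (Set.Icc (-(M:ℝ)) M)).toReal with hε_def
  have hε : 0 < ε := ENNReal.toReal_pos hM (measure_ne_top _ _)
  -- lower bound for y ≥ 0
  have hlow : ∀ y : ℝ, 0 ≤ y →
      Real.log (c * ε) - (y + M) ^ 2 / 2 ≤ S y := by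
    intro y hy
    have hpt : ∀ μ ∈ Set.Icc (-(M:ℝ)) M,
        c * Real.exp (-(y + M) ^ 2 / 2) ≤ stdNormalPDF (y - μ) := by
      intro μ hμ
      obtain ⟨h1, h2⟩ := hμ
      have hsq : (y - μ) ^ 2 ≤ (y + M) ^ 2 := by nlinarith
      unfold stdNormalPDF
      have := Real.exp_le_exp.mpr (show -(y + M) ^ 2 / 2 ≤ -(y - μ) ^ 2 / 2 by linarith)
      exact mul_le_mul_of_nonneg_left this (by positivity)
    have h1 : c * Real.exp (-(y + M) ^ 2 / 2) * ε ≤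
        ∫ μ in Set.Icc (-(M:ℝ)) M, stdNormalPDF (y - μ) ∂F :=
      setIntegral_ge_of_const_le_real measurableSet_Icc (measure_ne_top _ _) hpt
        ((hint y).integrableOn)
    have h2 : (∫ μ in Set.Icc (-(M:ℝ)) M, stdNormalPDF (y - μ) ∂F) ≤
        ∫ μ, stdNormalPDF (y - μ) ∂F :=
      setIntegral_le_integral (hint y) (ae_of_all _ fun μ => stdNormalPDF_nonneg _)
    have h3 : c * Real.exp (-(y + M) ^ 2 / 2) * ε ≤ Real.exp (S y) := by
      rw [← h y]; exact h1.trans h2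
    have h4 : Real.exp (Real.log (c * ε) - (y + M) ^ 2 / 2)
        = c * Real.exp (-(y + M) ^ 2 / 2) * ε := by
      rw [Real.exp_sub, Real.exp_log (by positivity), neg_div, Real.exp_neg]
      ring
    rw [← h4] at h3
    exact Real.exp_le_exp.mp h3
  -- case split on sign of β K
  rcases lt_or_gt_of_ne hβK with hneg | hpos
  · -- β K < 0 : use the lower bound with quadratic correction
    set δ : ℕ → ℝ := fun k =>
      if k = 0 then (M:ℝ) ^ 2 / 2 else if k = 1 then (M:ℝ) else if k = 2 then 1/2 else 0
      with hδ_def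
    obtain ⟨p, hpeval, hpdeg, hpcoeff⟩ := aux_mkPoly K (fun k => β k + δ k)
    have hδK : δ K = 0 := by
      simp only [hδ_def]
      rw [if_neg (by omega), if_neg (by omega), if_neg (by omega)]
    rw [hδK, add_zero] at hpcoeff
    have hdegK : p.natDegree = K :=
      le_antisymm hpdeg (Polynomial.le_natDegree_of_ne_zero (hpcoeff ▸ hβK))
    have hlead : p.leadingCoeff = β K := by rw [Polynomial.leadingCoeff, hdegK, hpcoeff]
    have hdegpos : 0 < p.degree := by
      rw [Polynomial.degree_eq_natDegree (fun h0 => by simp [h0, hβK.symm] at hpcoeff)]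
      exact_mod_cast by omega
    have hsum : ∀ y : ℝ, p.eval y = S y + (y + (M:ℝ)) ^ 2 / 2 := by
      intro y
      rw [hpeval y]
      have h1 : ∑ k ∈ Finset.range (K + 1), (β k + δ k) * y ^ k
          = (∑ k ∈ Finset.range (K + 1), β k * y ^ k)
            + ∑ k ∈ Finset.range (K + 1), δ k * y ^ k := by
        rw [← Finset.sum_add_distrib]
        exact Finset.sum_congr rfl fun k _ => by ring
      have h2 : ∑ k ∈ Finset.range (K + 1), δ k * y ^ k = (y + (M:ℝ)) ^ 2 / 2 := by
        rw [← Finset.sum_subset (Finset.range_subset_range.mpr (by omega : 3 ≤ K + 1))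
          (fun k _ hk => ?_)]
        · simp only [hδ_def, Finset.sum_range_succ, Finset.sum_range_zero]
          norm_num
          ring
        · have hk3 : 3 ≤ k := by simpa using Nat.le_of_not_lt (by simpa using hk)
          simp only [hδ_def, if_neg (by omega : ¬ k = 0), if_neg (by omega : ¬ k = 1),
            if_neg (by omega : ¬ k = 2), zero_mul]
      rw [h1, h2]
    have htend : Tendsto (fun x => p.eval x) atTop atBot :=
      p.tendsto_atBot_of_leadingCoeff_nonpos hdegpos (hlead ▸ hneg.le)
    obtain ⟨y, hy1, hy2⟩ :=
      ((htend.eventually_lt_atBot (Real.log (c * ε))).and (eventually_ge_atTop 0)).exists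
    have hlb := hlow y hy2
    rw [hsum y] at hy1
    linarith
  · -- β K > 0 : exp of polynomial is unbounded
    obtain ⟨p, hpeval, hpdeg, hpcoeff⟩ := aux_mkPoly K β
    have hdegK : p.natDegree = K :=
      le_antisymm hpdeg (Polynomial.le_natDegree_of_ne_zero (hpcoeff ▸ hβK))
    have hlead : p.leadingCoeff = β K := by rw [Polynomial.leadingCoeff, hdegK, hpcoeff]
    have hdegpos : 0 < p.degree := by
      rw [Polynomial.degree_eq_natDegree (fun h0 => by simp [h0, hβK.symm] at hpcoeff)]
      exact_mod_cast by omega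
    have htend : Tendsto (fun x => p.eval x) atTop atTop :=
      p.tendsto_atTop_of_leadingCoeff_nonneg hdegpos (hlead ▸ hpos.le)
    obtain ⟨y, hy⟩ := (htend.eventually_gt_atTop (Real.log c)).exists
    rw [hpeval y] at hy
    exact absurd (hup y) (by exact not_le.mpr hy)
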